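/- The converse of the previous implication fails: let Σ = {b,c} and L = {(σ,τ) ∈ TΣ^ω : there exists k ≥ 1 with σ_k = b and τ_k ≥ 5} (the language of F_{≥5} b). For the finite timed word ρ = (c, 6): D^ρ_L = 0 and D^ρ_{L̄} = +∞ (so V_T(L)(ρ) = (0,+∞)), yet V_D(L)(ρ) = ? (there is a divergent extension of ρ in L and a divergent extension of ρ outside L). -/

import Mathlib

open Filter

/-! ## Timed words -/

/-- An infinite timed word: a symbol sequence and a timestamp sequence (positions 0,1,2,…
correspond to the paper's positions 1,2,3,…; the convention τ₀ = 0 is used in definitions). -/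
abbrev InfTW (α : Type) := (ℕ → α) × (ℕ → ℝ)

/-- `ρ` is a genuine infinite timed word: timestamps are strictly increasing
non-negative reals (strictly above the conventional τ₀ = 0). -/
def IsInfTW {α : Type} (ρ : InfTW α) : Prop := 0 < ρ.2 0 ∧ StrictMono ρ.2

/-- Time divergent infinite timed words. -/
def IsDivergent {α : Type} (ρ : InfTW α) : Prop := IsInfTW ρ ∧ Tendsto ρ.2 atTop atTop

/-- A finite timed word with `len + 1` letters, at positions `0,…,len`. -/
structure FinTW (α : Type) where
  len : ℕ
  sym : ℕ → α
  time : ℕ → ℝ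

/-- `ρ` is a genuine finite timed word: `0 < τ₁ < … < τ_n`. -/
def IsFinTW {α : Type} (ρ : FinTW α) : Prop :=
  0 < ρ.time 0 ∧ ∀ i < ρ.len, ρ.time i < ρ.time (i + 1)

/-- Duration of a finite timed word. -/
def FinTW.dur {α : Type} (ρ : FinTW α) : ℝ := ρ.time ρ.len

/-- Concatenation of a finite timed word with an infinite timed word
(timestamps of the suffix are shifted by the duration). -/
def FinTW.catInf {α : Type} (ρ : FinTW α) (μ : InfTW α) : InfTW α :=
  (fun i => if i ≤ ρ.len then ρ.sym i else μ.1 (i - ρ.len - 1),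
   fun i => if i ≤ ρ.len then ρ.time i else ρ.dur + μ.2 (i - ρ.len - 1))

/-- Concatenation of two finite timed words. -/
def FinTW.catFin {α : Type} (ρ ρ' : FinTW α) : FinTW α where
  len := ρ.len + 1 + ρ'.len
  sym := fun i => if i ≤ ρ.len then ρ.sym i else ρ'.sym (i - ρ.len - 1)
  time := fun i => if i ≤ ρ.len then ρ.time i else ρ.dur + ρ'.time (i - ρ.len - 1)

/-! ## Verdicts -/

inductive Verdict where
  | top
  | bot
  | unknown
deriving DecidableEq

open Classical in
/-- The verdict (no divergence assumption). -/
noncomputable def Vv {α : Type} (φ : Set (InfTW α)) (ρ : FinTW α) : Verdict :=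
  if ∀ μ, IsInfTW μ → ρ.catInf μ ∈ φ then .top
  else if ∀ μ, IsInfTW μ → ρ.catInf μ ∉ φ then .bot
  else .unknown

open Classical in
/-- The verdict under time divergence. -/
noncomputable def VD {α : Type} (φ : Set (InfTW α)) (ρ : FinTW α) : Verdict :=
  if ∀ μ, IsDivergent μ → ρ.catInf μ ∈ φ then .top
  else if ∀ μ, IsDivergent μ → ρ.catInf μ ∉ φ then .bot
  else .unknown

/-- `D^ρ_{φ̄}`: the infimum (in `[0,∞]`, inf ∅ = ∞) of durations of finite continuations
`ρ'` such that every divergent continuation of `ρ·ρ'` avoids `φ`. -/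
noncomputable def Dbar {α : Type} (φ : Set (InfTW α)) (ρ : FinTW α) : ENNReal :=
  sInf {c | ∃ ρ' : FinTW α, IsFinTW ρ' ∧
    (∀ μ, IsDivergent μ → (ρ.catFin ρ').catInf μ ∉ φ) ∧ c = ENNReal.ofReal ρ'.dur}

/-- `D^ρ_φ`: the infimum (in `[0,∞]`, inf ∅ = ∞) of durations of finite continuations
`ρ'` such that every divergent continuation of `ρ·ρ'` lies in `φ`. -/
noncomputable def Dphi {α : Type} (φ : Set (InfTW α)) (ρ : FinTW α) : ENNReal :=
  sInf {c | ∃ ρ' : FinTW α, IsFinTW ρ' ∧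
    (∀ μ, IsDivergent μ → (ρ.catFin ρ').catInf μ ∈ φ) ∧ c = ENNReal.ofReal ρ'.dur}

/-! ## Statement 18 -/

inductive BC where
  | b
  | c
deriving DecidableEq

/-- The language of `F_{≥5} b` over `{b,c}`. -/
def L5b : Set (InfTW BC) := {ρ | IsInfTW ρ ∧ ∃ k, ρ.1 k = .b ∧ (5 : ℝ) ≤ ρ.2 k}

/-- The finite timed word `(c,6)`. -/
def rho18 : FinTW BC := ⟨0, fun _ => .c, fun _ => 6⟩


def muB : InfTW BC := (fun _ => .b, fun i => (i : ℝ) + 1)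

def muC : InfTW BC := (fun _ => .c, fun i => (i : ℝ) + 1)

lemma muB_div : IsDivergent muB := by
  refine ⟨⟨by norm_num [muB], ?_⟩, ?_⟩
  · intro a b h
    simp only [muB, add_lt_add_iff_right, Nat.cast_lt]
    exact h
  · exact tendsto_atTop_add_const_right _ 1 tendsto_natCast_atTop_atTop

lemma muC_div : IsDivergent muC := by
  refine ⟨⟨by norm_num [muC], ?_⟩, ?_⟩
  · intro a b h
    simp only [muC, add_lt_add_iff_right, Nat.cast_lt]
    exact h
  · exact tendsto_atTop_add_const_right _ 1 tendsto_natCast_atTop_atTop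

lemma catInf_isInfTW {α : Type} {ρ : FinTW α} {μ : InfTW α}
    (hρ : IsFinTW ρ) (hμ : IsInfTW μ) : IsInfTW (ρ.catInf μ) := by
  constructor
  · simpa [FinTW.catInf] using hρ.1
  · apply strictMono_nat_of_lt_succ
    intro i
    simp only [FinTW.catInf]
    rcases le_or_gt (i + 1) ρ.len with h1 | h1
    · rw [if_pos (le_trans (Nat.le_succ i) h1), if_pos h1]
      exact hρ.2 i h1
    · rw [if_neg (not_le_of_gt h1)]
      rcases le_or_gt i ρ.len with h2 | h2
      · have hi : i = ρ.len := le_antisymm h2 (Nat.lt_succ_iff.mp h1)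
        rw [if_pos h2]
        have h0 : 0 < μ.2 0 := hμ.1
        have he : i + 1 - ρ.len - 1 = 0 := by omega
        rw [he, hi]
        simpa [FinTW.dur, hi] using lt_add_of_pos_right (ρ.time ρ.len) h0
      · rw [if_neg (not_le_of_gt h2)]
        have hlt : i - ρ.len - 1 < i + 1 - ρ.len - 1 := by omega
        exact add_lt_add_right (hμ.2 hlt) _

lemma catFin_rho18_isFinTW {ρ' : FinTW BC} (h : IsFinTW ρ') :
    IsFinTW (rho18.catFin ρ') := by
  constructor
  · simp [FinTW.catFin, rho18]
  · intro i hi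
    simp only [FinTW.catFin, rho18, FinTW.dur] at *
    rcases Nat.eq_zero_or_pos i with h0 | h0
    · subst h0
      change (if (0:ℕ) ≤ 0 then (6:ℝ) else 6 + ρ'.time (0 - 0 - 1)) < (if (0:ℕ) + 1 ≤ 0 then (6:ℝ) else 6 + ρ'.time (0 + 1 - 0 - 1))
      rw [if_pos (le_refl 0), if_neg (by omega)]
      simp only [Nat.zero_add, Nat.sub_self]
      have := h.1
      norm_num
      linarith
    · change (if i ≤ 0 then (6:ℝ) else 6 + ρ'.time (i - 0 - 1)) < (if i + 1 ≤ 0 then (6:ℝ) else 6 + ρ'.time (i + 1 - 0 - 1))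
      rw [if_neg (by omega), if_neg (by omega)]
      have hlt : i - 0 - 1 < ρ'.len := by omega
      have h2 := h.2 _ hlt
      have he : i + 1 - 0 - 1 = (i - 0 - 1) + 1 := by omega
      rw [he]
      linarith

/-- the all-b divergent continuation of `rho18.catFin ρ'` lies in `L5b` -/
lemma hit_L5b {ρ' : FinTW BC} (h : IsFinTW ρ') :
    (rho18.catFin ρ').catInf muB ∈ L5b := by
  refine ⟨catInf_isInfTW (catFin_rho18_isFinTW h) muB_div.1, ?_⟩
  set d := (rho18.catFin ρ').dur with hd
  obtain ⟨n, hn⟩ := exists_nat_ge (5 - d)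
  set m := (rho18.catFin ρ').len with hm
  refine ⟨m + 1 + n, ?_, ?_⟩
  · simp only [FinTW.catInf]
    rw [if_neg (by omega)]
    rfl
  · simp only [FinTW.catInf]
    rw [if_neg (by omega)]
    have he : m + 1 + n - m - 1 = n := by omega
    rw [he, ← hd]
    simp only [muB]
    linarith

/-- every divergent continuation of `rho18.catFin ⟨0, b, t⟩` (t > 0) lies in `L5b` -/
lemma in_L5b_of_b {t : ℝ} (ht : 0 < t) :
    ∀ μ, IsDivergent μ →
      (rho18.catFin ⟨0, fun _ => .b, fun _ => t⟩).catInf μ ∈ L5b := by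
  intro μ hμ
  have hfin : IsFinTW (⟨0, fun _ => .b, fun _ => t⟩ : FinTW BC) :=
    ⟨ht, by intro i hi; simp at hi⟩
  refine ⟨catInf_isInfTW (catFin_rho18_isFinTW hfin) hμ.1, 1, ?_, ?_⟩
  · simp [FinTW.catInf, FinTW.catFin, rho18]
  · simp only [FinTW.catInf, FinTW.catFin, rho18, FinTW.dur]
    norm_num
    linarith

theorem stmt18 :
    Dphi L5b rho18 = 0 ∧ Dbar L5b rho18 = ⊤ ∧ VD L5b rho18 = .unknown ∧
    (∃ μ : InfTW BC, IsDivergent μ ∧ rho18.catInf μ ∈ L5b) ∧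
    (∃ μ : InfTW BC, IsDivergent μ ∧ rho18.catInf μ ∉ L5b) := by
  constructor
  · -- Dphi = 0
    apply le_antisymm _ zero_le
    apply ENNReal.le_of_forall_pos_le_add
    intro ε hε _
    rw [zero_add]
    set ρ' : FinTW BC := ⟨0, fun _ => .b, fun _ => (ε : ℝ)⟩ with hρ'
    have hfin : IsFinTW ρ' := ⟨by exact_mod_cast hε, by intro i hi; simp [hρ'] at hi⟩
    have hmem : ENNReal.ofReal ρ'.dur ∈
        {c | ∃ ρ'' : FinTW BC, IsFinTW ρ'' ∧
          (∀ μ, IsDivergent μ → ((rho18.catFin ρ'').catInf μ ∈ L5b)) ∧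
          c = ENNReal.ofReal ρ''.dur} := by
      exact ⟨ρ', hfin, in_L5b_of_b (by exact_mod_cast hε), rfl⟩
    calc Dphi L5b rho18 ≤ ENNReal.ofReal ρ'.dur := sInf_le hmem
      _ = (ε : ENNReal) := by simp [hρ', FinTW.dur]
  refine ⟨?_, ?_, ?_, ?_⟩
  · -- Dbar = ⊤
    rw [Dbar, sInf_eq_top]
    rintro a ⟨ρ', hfin, hall, rfl⟩
    exact absurd (hit_L5b hfin) (hall muB muB_div)
  · -- VD = unknown
    have h1 : rho18.catInf muB ∈ L5b := by
      refine ⟨catInf_isInfTW ⟨by norm_num [rho18], by intro i hi; simp [rho18] at hi⟩ muB_div.1, 1, ?_, ?_⟩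
      · simp [FinTW.catInf, rho18, muB]
      · simp only [FinTW.catInf, rho18, muB, FinTW.dur]
        norm_num
    have h2 : rho18.catInf muC ∉ L5b := by
      rintro ⟨-, k, hk, -⟩
      revert hk
      simp only [FinTW.catInf, rho18, muC]
      simp
    rw [VD]
    rw [if_neg (fun h => h2 (h muC muC_div)), if_neg (fun h => h muB muB_div h1)]
  · exact ⟨muB, muB_div, by
      refine ⟨catInf_isInfTW ⟨by norm_num [rho18], by intro i hi; simp [rho18] at hi⟩ muB_div.1, 1, ?_, ?_⟩
      · simp [FinTW.catInf, rho18, muB]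
      · simp only [FinTW.catInf, rho18, muB, FinTW.dur]
        norm_num⟩
  · refine ⟨muC, muC_div, ?_⟩
    rintro ⟨-, k, hk, -⟩
    revert hk
    simp only [FinTW.catInf, rho18, muC]
    simp
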